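/- Let R be a large integral domain and A an IP*-set in (R, +). Then for every nonzero r ∈ R, the dilate rA = {ra : a ∈ A} is again an IP*-set in (R, +). -/

import Mathlib

/-- `R` is a large integral domain: every nonzero ideal has finite (additive) index. -/
def IsLargeID (R : Type*) [CommRing R] [IsDomain R] : Prop :=
  ∀ I : Ideal R, I ≠ ⊥ → Finite (R ⧸ I)

/-- `A` is an `IP⋆`-set in `(R,+)`: it meets the set of finite sums of every sequence. -/
def IPStar {R : Type*} [AddCommSemigroup R] (A : Set R) : Prop :=
  ∀ x : Stream' R, ∃ s ∈ Hindman.FS x, s ∈ A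

private lemma FS_mul {R : Type*} [CommRing R] (r : R) (w : Stream' R) {s : R}
    (h : s ∈ Hindman.FS w) : r * s ∈ Hindman.FS (w.map (fun a => r * a)) := by
  induction h with
  | head' a => exact Hindman.FS.head _
  | tail' a m _ ih => exact Hindman.FS.tail _ _ ih
  | cons' a m _ ih =>
    rw [mul_add]
    exact Hindman.FS.cons _ _ ih

/-- In a large integral domain, any nonzero dilate `rA` of an `IP⋆`-set `A` in `(R,+)`
is again an `IP⋆`-set. -/
theorem stmt_8 {R : Type*} [CommRing R] [IsDomain R] (hR : IsLargeID R)
    (A : Set R) (hA : IPStar A) (r : R) (hr : r ≠ 0) :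
    IPStar ((fun a => r * a) '' A) := by
  intro x
  set I : Ideal R := Ideal.span {r} with hI
  have hIne : I ≠ ⊥ := by
    simp [hI, Ideal.span_singleton_eq_bot, hr]
  have : Finite (R ⧸ I) := hR I hIne
  set π := Ideal.Quotient.mk I with hπ
  -- cover FS x by residue classes
  obtain ⟨c, ⟨q, hq⟩, b, hb⟩ := Hindman.FS_partition_regular x
    (Set.range (fun q : R ⧸ I => π ⁻¹' {q} ∩ Hindman.FS x))
    (Set.finite_range _)
    (fun m hm => ⟨π ⁻¹' {π m} ∩ Hindman.FS x, ⟨π m, rfl⟩, rfl, hm⟩)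
  subst hq
  have hbFS : Hindman.FS b ⊆ Hindman.FS x := fun m hm => (hb hm).2
  have hbq : ∀ m ∈ Hindman.FS b, π m = q := fun m hm => (hb hm).1
  -- q is additively idempotent, hence zero
  have hq0 : q = 0 := by
    have h1 : b.head ∈ Hindman.FS b := Hindman.FS.head b
    have h2 : b.tail.head ∈ Hindman.FS b := Hindman.FS.tail _ _ (Hindman.FS.head b.tail)
    have h3 : b.head + b.tail.head ∈ Hindman.FS b :=
      Hindman.FS.cons _ _ (Hindman.FS.head b.tail)
    have := hbq _ h3
    rw [map_add, hbq _ h1, hbq _ h2] at this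
    exact (add_eq_left.mp this)
  -- each b n is divisible by r
  have hdiv : ∀ n : ℕ, ∃ w, b.get n = r * w := by
    intro n
    have hmem : b.get n ∈ Hindman.FS b := by
      have h := Hindman.FS_iter_tail_sub_FS b n (Hindman.FS.head (b.drop n))
      simpa [Stream'.head_drop] using h
    have : π (b.get n) = 0 := by rw [hbq _ hmem, hq0]
    rw [hπ, Ideal.Quotient.eq_zero_iff_mem, hI, Ideal.mem_span_singleton] at this
    obtain ⟨w, hw⟩ := this
    exact ⟨w, hw⟩
  choose w hw using hdiv
  have hbmap : b = Stream'.map (fun a => r * a) w := by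
    apply Stream'.ext
    intro n
    exact hw n
  obtain ⟨s, hsFS, hsA⟩ := hA w
  refine ⟨r * s, hbFS ?_, ⟨s, hsA, rfl⟩⟩
  rw [hbmap]
  exact FS_mul r w hsFS
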